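/- In the rejection sampling block analysis, with acceptance probability of sample m equal to min{1, c_t π_t(a_m|x_m)/μ_m(a_m|x_m)}, the marginal probability of accepting sample m (summing over contexts and actions) equals c_t(1 − ε_m), where ε_m = P_{(x,a)∼π_t}[E_m] − P_{(x,a)∼μ_m}[E_m]/c_t and E_m = {(x,a): c_t π_t(a|x) > μ_m(a|x)}. -/
import Mathlib


open Finset
open scoped Classical

/-- Marginal acceptance probability in the rejection sampling step of DR-ns:
`Σ_{x,a} accept_m(x,a) = c_t(1 − ε_m)` where `accept_m(x,a) = min{μ_m(x,a), c π_t(x,a)}`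
(joint with the context distribution `D`). -/
theorem stmt17 {X A : Type*} [Fintype X] [Fintype A]
    (D : X → ℝ) (pit : X → A → ℝ) (mu : X → A → ℝ) (c : ℝ)
    (hD0 : ∀ x, 0 ≤ D x) (hD1 : ∑ x, D x = 1)
    (hpit0 : ∀ x a, 0 ≤ pit x a) (hpit1 : ∀ x, ∑ a, pit x a = 1)
    (hmu0 : ∀ x a, 0 ≤ mu x a) (hmu1 : ∀ x, ∑ a, mu x a = 1)
    (hc : 0 < c) (hc1 : c ≤ 1)
    (eps : ℝ)
    (heps : eps = (∑ x, ∑ a, if c * pit x a > mu x a then D x * pit x a else 0)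
        - (∑ x, ∑ a, if c * pit x a > mu x a then D x * mu x a else 0) / c) :
    ∑ x, ∑ a, D x * min (mu x a) (c * pit x a) = c * (1 - eps) := by
  have key : ∀ x a, D x * min (mu x a) (c * pit x a)
      = c * (D x * pit x a)
        - ((if c * pit x a > mu x a then D x * pit x a else 0) * c
          - (if c * pit x a > mu x a then D x * mu x a else 0)) := by
    intro x a
    by_cases h : c * pit x a > mu x a
    · rw [min_eq_left h.le]; simp [h]; ring
    · rw [min_eq_right (not_lt.mp h)]; simp [h]; ring
  simp_rw [key, Finset.sum_sub_distrib, ← Finset.mul_sum, ← Finset.sum_mul, hpit1, mul_one,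
    hD1, mul_one]
  rw [heps]
  field_simp
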